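/- arXiv:2011.00787 — 4 statements merged into one kernel-verified Lean document; each statement's English description precedes it below -/
import Mathlib

section
/- Fix a natural number k. For real parameters n, a, b and β > 0, define M_k(n,β,a,b) := ∑_{κ: |κ|=k} ([u_1]_κ^{(2/β)} / [u_2]_κ^{(2/β)}) · C_κ^{(2/β)}(n), where u_1 := (β/2)(n−1)+a+1, u_2 := β(n−1)+a+b+2, and the sum runs over all partitions κ of k. Then, provided [u_2]_κ^{(2/β)} ≠ 0 for every partition κ of k with the given parameters, and the corresponding denominators are nonzero for the dual parameter set (−βn/2, 4/β, −2a/β, −2b/β), the functional equation M_k(n,β,a,b) = (−2/β)^k · M_k(−βn/2, 4/β, −2a/β, −2b/β) holds. -/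
/-- The conjugate partition evaluated at `j ≥ 1`: the number of parts of `κ` that are `≥ j`. -/
def conjPart {n : ℕ} (κ : Nat.Partition n) (j : ℕ) : ℕ :=
  Multiset.card (κ.parts.filter fun q => j ≤ q)

/-- The `i`-th largest part of `κ` (1-indexed); `0` if `i` exceeds the number of parts. -/
def partOf {n : ℕ} (κ : Nat.Partition n) (i : ℕ) : ℕ :=
  ((Finset.Icc 1 n).filter fun j => i ≤ conjPart κ j).card

/-- The generalized Pochhammer symbol
`[u]_κ^{(α)} = ∏_{j≥1} ∏_{i=0}^{κ_j−1} (u − (j−1)/α + i)`. -/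
noncomputable def genPoch (α : ℝ) {n : ℕ} (κ : Nat.Partition n) (u : ℝ) : ℝ :=
  ∏ j ∈ Finset.range (conjPart κ 1), ∏ i ∈ Finset.range (partOf κ (j + 1)),
    (u - (j : ℝ) / α + i)

/-- The value `C_κ^{(α)}(x)` of the renormalised Jack polynomial with all arguments equal to 1,
as a rational expression in the parameter `x`. -/
noncomputable def CJack (α : ℝ) {n : ℕ} (κ : Nat.Partition n) (x : ℝ) : ℝ :=
  α ^ n * (n.factorial : ℝ) *
      (∏ i ∈ Finset.range (conjPart κ 1), ∏ j ∈ Finset.range (partOf κ (i + 1)),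
        (α * j + x - i)) /
    ((∏ i ∈ Finset.range (conjPart κ 1), ∏ j ∈ Finset.range (partOf κ (i + 1)),
        (α * ((partOf κ (i + 1) : ℝ) - j) + (conjPart κ (j + 1) : ℝ) - ((i : ℝ) + 1))) *
      (∏ i ∈ Finset.range (conjPart κ 1), ∏ j ∈ Finset.range (partOf κ (i + 1)),
        (α * ((partOf κ (i + 1) : ℝ) - j - 1) + (conjPart κ (j + 1) : ℝ) - i)))

/-- `M_k(n,β,a,b) = ∑_{|κ|=k} ([u_1]_κ^{(2/β)}/[u_2]_κ^{(2/β)}) C_κ^{(2/β)}(n)` with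
`u_1 = (β/2)(n−1)+a+1`, `u_2 = β(n−1)+a+b+2`. -/
noncomputable def Mfun (k : ℕ) (n β a b : ℝ) : ℝ :=
  ∑ κ : Nat.Partition k,
    genPoch (2 / β) κ ((β / 2) * (n - 1) + a + 1) /
        genPoch (2 / β) κ (β * (n - 1) + a + b + 2) *
      CJack (2 / β) κ n

variable {n : ℕ} (κ : Nat.Partition n)

lemma part_le_n {p : ℕ} (hp : p ∈ κ.parts) : p ≤ n := by
  have := Multiset.single_le_sum (s := κ.parts) (fun x _ => Nat.zero_le x) p hp
  rwa [κ.parts_sum] at this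

lemma conjPart_anti {j j' : ℕ} (h : j ≤ j') : conjPart κ j' ≤ conjPart κ j := by
  exact Multiset.card_le_card (Multiset.monotone_filter_right _ (fun b hb => h.trans hb))

lemma conjPart_le_card (j : ℕ) : conjPart κ j ≤ Multiset.card κ.parts :=
  Multiset.card_le_card (Multiset.filter_le _ _)

lemma card_parts_le : Multiset.card κ.parts ≤ n := by
  have h1 : Multiset.card κ.parts = (κ.parts.map fun _ => 1).sum := by
    simp
  have h2 : (κ.parts.map fun (_ : ℕ) => 1).sum ≤ κ.parts.sum := by
    apply Multiset.sum_map_le_sum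
    intro x hx
    exact κ.parts_pos hx
  rw [κ.parts_sum] at h2
  omega

lemma conjPart_one : conjPart κ 1 = Multiset.card κ.parts := by
  unfold conjPart
  congr 1
  rw [Multiset.filter_eq_self]
  intro a ha
  exact κ.parts_pos ha

lemma conjPart_le_n (j : ℕ) : conjPart κ j ≤ n :=
  (conjPart_le_card κ j).trans (card_parts_le κ)

lemma partOf_le_n (i : ℕ) : partOf κ i ≤ n := by
  unfold partOf
  calc ((Finset.Icc 1 n).filter fun j => i ≤ conjPart κ j).card
      ≤ (Finset.Icc 1 n).card := Finset.card_filter_le _ _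
    _ = n := by rw [Nat.card_Icc]; omega

/-- The Galois-type correspondence between a partition's parts and its conjugate. -/
lemma galois (i j : ℕ) : j < partOf κ (i + 1) ↔ i < conjPart κ (j + 1) := by
  constructor
  · intro h
    by_contra hc
    push_neg at hc
    have hsub : ((Finset.Icc 1 n).filter fun c => i + 1 ≤ conjPart κ c) ⊆ Finset.Icc 1 j := by
      intro c hc'
      simp only [Finset.mem_filter, Finset.mem_Icc] at hc' ⊢
      refine ⟨hc'.1.1, ?_⟩
      by_contra hcj
      push_neg at hcj
      have : conjPart κ c ≤ conjPart κ (j + 1) := conjPart_anti κ hcj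
      omega
    have := Finset.card_le_card hsub
    rw [Nat.card_Icc] at this
    unfold partOf at h
    omega
  · intro h
    -- there is a part ≥ j+1, hence j+1 ≤ n
    have hpos : 0 < conjPart κ (j + 1) := by omega
    have hjn : j + 1 ≤ n := by
      unfold conjPart at hpos
      rw [Multiset.card_pos_iff_exists_mem] at hpos
      obtain ⟨p, hp⟩ := hpos
      rw [Multiset.mem_filter] at hp
      exact hp.2.trans (part_le_n κ hp.1)
    have hsub : Finset.Icc 1 (j + 1) ⊆ (Finset.Icc 1 n).filter fun c => i + 1 ≤ conjPart κ c := by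
      intro c hc
      simp only [Finset.mem_Icc] at hc
      simp only [Finset.mem_filter, Finset.mem_Icc]
      refine ⟨⟨hc.1, hc.2.trans hjn⟩, ?_⟩
      have := conjPart_anti κ hc.2 (j := c) (j' := j+1)
      omega
    have := Finset.card_le_card hsub
    rw [Nat.card_Icc] at this
    unfold partOf
    omega

lemma partOf_eq_zero {i : ℕ} (h : conjPart κ 1 ≤ i) : partOf κ (i + 1) = 0 := by
  by_contra hc
  have h0 : 0 < partOf κ (i + 1) := Nat.pos_of_ne_zero hc
  rw [galois] at h0
  norm_num at h0
  omega
lemma multiset_sum_swap {ι : Type*} (F : Finset ι) (s : Multiset ℕ) (f : ι → ℕ → ℕ) :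
    ∑ j ∈ F, (s.map (f j)).sum = (s.map fun p => ∑ j ∈ F, f j p).sum := by
  induction s using Multiset.induction_on with
  | empty => simp
  | cons a s ih => simp [Finset.sum_add_distrib, ih]

lemma conjPart_eq_summap (j : ℕ) :
    conjPart κ j = (κ.parts.map fun p => if j ≤ p then 1 else 0).sum := by
  unfold conjPart
  induction κ.parts using Multiset.induction_on with
  | empty => simp
  | cons a s ih => by_cases h : j ≤ a <;> simp [Multiset.filter_cons, h, ih, Nat.add_comm]

lemma sum_ite_le {p m : ℕ} (hp : p ≤ m) :
    ∑ j ∈ Finset.Icc 1 m, (if j ≤ p then 1 else 0) = p := by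
  rw [← Finset.sum_filter]
  have : (Finset.Icc 1 m).filter (fun j => j ≤ p) = Finset.Icc 1 p := by
    ext x; simp only [Finset.mem_filter, Finset.mem_Icc]; omega
  rw [this, Finset.sum_const, Nat.card_Icc, smul_eq_mul, mul_one]
  omega

lemma sum_conjPart : ∑ j ∈ Finset.Icc 1 n, conjPart κ j = n := by
  calc ∑ j ∈ Finset.Icc 1 n, conjPart κ j
      = (κ.parts.map fun p => ∑ j ∈ Finset.Icc 1 n, if j ≤ p then 1 else 0).sum := by
        simp_rw [conjPart_eq_summap]; exact multiset_sum_swap _ _ _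
    _ = (κ.parts.map id).sum := by
        congr 1
        apply Multiset.map_congr rfl
        intro p hp
        simpa using sum_ite_le (part_le_n κ hp)
    _ = n := by rw [Multiset.map_id, κ.parts_sum]

lemma sum_partOf : ∑ i ∈ Finset.range (conjPart κ 1), partOf κ (i + 1) = n := by
  have h1 : ∀ i, partOf κ (i + 1)
      = ∑ c ∈ Finset.Icc 1 n, (if i + 1 ≤ conjPart κ c then 1 else 0) := by
    intro i
    unfold partOf
    rw [← Finset.sum_filter, Finset.sum_const, smul_eq_mul, mul_one]
  calc ∑ i ∈ Finset.range (conjPart κ 1), partOf κ (i + 1)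
      = ∑ c ∈ Finset.Icc 1 n, ∑ i ∈ Finset.range (conjPart κ 1),
          (if i + 1 ≤ conjPart κ c then 1 else 0) := by
        simp_rw [h1]; exact Finset.sum_comm
    _ = ∑ c ∈ Finset.Icc 1 n, conjPart κ c := by
        apply Finset.sum_congr rfl
        intro c hc
        rw [← Finset.sum_filter]
        have : (Finset.range (conjPart κ 1)).filter (fun i => i + 1 ≤ conjPart κ c)
            = Finset.range (conjPart κ c) := by
          have hle : conjPart κ c ≤ conjPart κ 1 := by
            simp only [Finset.mem_Icc] at hc
            exact conjPart_anti κ hc.1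
          ext x; simp only [Finset.mem_filter, Finset.mem_range]; omega
        rw [this, Finset.sum_const, Finset.card_range, smul_eq_mul, mul_one]
    _ = n := sum_conjPart κ

/-- The conjugate partition. -/
def conj : Nat.Partition n where
  parts := ((Finset.Icc 1 n).val.map (conjPart κ)).filter (0 < ·)
  parts_pos := fun h => (Multiset.mem_filter.mp h).2
  parts_sum := by
    have hsplit := Multiset.filter_add_not (fun x => 0 < x)
      ((Finset.Icc 1 n).val.map (conjPart κ))
    have h2 : (((Finset.Icc 1 n).val.map (conjPart κ)).filter (fun x => ¬ 0 < x)).sum = 0 := by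
      apply Multiset.sum_eq_zero
      intro x hx
      have := (Multiset.mem_filter.mp hx).2
      omega
    have h3 : (((Finset.Icc 1 n).val.map (conjPart κ)).filter (0 < ·)).sum
        + (((Finset.Icc 1 n).val.map (conjPart κ)).filter (fun x => ¬ 0 < x)).sum
        = ((Finset.Icc 1 n).val.map (conjPart κ)).sum := by
      rw [← Multiset.sum_add, hsplit]
    have h4 : ((Finset.Icc 1 n).val.map (conjPart κ)).sum
        = ∑ j ∈ Finset.Icc 1 n, conjPart κ j := rfl
    rw [h4, sum_conjPart κ] at h3
    omega

lemma conjPart_conj (j : ℕ) : conjPart (conj κ) (j + 1) = partOf κ (j + 1) := by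
  unfold conjPart conj partOf
  simp only
  rw [Multiset.filter_filter]
  have : (((Finset.Icc 1 n).val.map (conjPart κ)).filter fun q => j + 1 ≤ q ∧ 0 < q)
      = ((Finset.Icc 1 n).val.map (conjPart κ)).filter fun q => j + 1 ≤ q := by
    apply Multiset.filter_congr
    intro x _
    constructor
    · exact fun h => h.1
    · exact fun h => ⟨h, by omega⟩
  rw [this, Multiset.filter_map, Multiset.card_map]
  rfl

lemma partOf_conj (i : ℕ) : partOf (conj κ) (i + 1) = conjPart κ (i + 1) := by
  have key : ∀ j, j < partOf (conj κ) (i + 1) ↔ j < conjPart κ (i + 1) := by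
    intro j
    rw [galois, conjPart_conj, galois]
  have h1 := key (partOf (conj κ) (i + 1))
  have h2 := key (conjPart κ (i + 1))
  omega
lemma count_parts (v : ℕ) (hv : 1 ≤ v) :
    conjPart κ v = conjPart κ (v + 1) + Multiset.count v κ.parts := by
  have hsplit := Multiset.filter_add_not (fun q => v + 1 ≤ q) (κ.parts.filter fun q => v ≤ q)
  have hcard : Multiset.card ((κ.parts.filter fun q => v ≤ q).filter fun q => v + 1 ≤ q)
      + Multiset.card ((κ.parts.filter fun q => v ≤ q).filter fun q => ¬ v + 1 ≤ q)
      = conjPart κ v := by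
    rw [← Multiset.card_add, hsplit]; rfl
  have h1 : ((κ.parts.filter fun q => v ≤ q).filter fun q => v + 1 ≤ q)
      = κ.parts.filter fun q => v + 1 ≤ q := by
    rw [Multiset.filter_filter]
    apply Multiset.filter_congr
    intro x _
    omega
  have h2 : Multiset.card ((κ.parts.filter fun q => v ≤ q).filter fun q => ¬ v + 1 ≤ q)
      = Multiset.count v κ.parts := by
    rw [Multiset.filter_filter, Multiset.count_eq_card_filter_eq]
    congr 1
    apply Multiset.filter_congr
    intro x _
    omega
  rw [h1, h2] at hcard
  unfold conjPart at hcard ⊢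
  omega

lemma partition_ext {κ μ : Nat.Partition n}
    (h : ∀ j, 1 ≤ j → conjPart κ j = conjPart μ j) : κ = μ := by
  apply Nat.Partition.ext
  ext v
  rcases Nat.eq_zero_or_pos v with hv | hv
  · subst hv
    rw [Multiset.count_eq_zero_of_notMem, Multiset.count_eq_zero_of_notMem]
    · exact fun hc => absurd (μ.parts_pos hc) (lt_irrefl 0)
    · exact fun hc => absurd (κ.parts_pos hc) (lt_irrefl 0)
  · have hk := count_parts κ v hv
    have hm := count_parts μ v hv
    have e1 := h v hv
    have e2 := h (v + 1) (by omega)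
    omega

lemma conj_conj : conj (conj κ) = κ := by
  apply partition_ext
  intro j hj
  obtain ⟨j', rfl⟩ : ∃ j', j = j' + 1 := ⟨j - 1, by omega⟩
  rw [conjPart_conj, partOf_conj]
/-- Product over the cells of a partition. -/
noncomputable def Pprod {n : ℕ} (κ : Nat.Partition n) (f : ℕ → ℕ → ℝ) : ℝ :=
  ∏ i ∈ Finset.range (conjPart κ 1), ∏ j ∈ Finset.range (partOf κ (i + 1)), f i j

lemma Pprod_eq_full (f : ℕ → ℕ → ℝ) :
    Pprod κ f = ∏ i ∈ Finset.range n, ∏ j ∈ Finset.range n,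
      (if j < partOf κ (i + 1) then f i j else 1) := by
  unfold Pprod
  have hinner : ∀ i, ∏ j ∈ Finset.range (partOf κ (i + 1)), f i j
      = ∏ j ∈ Finset.range n, (if j < partOf κ (i + 1) then f i j else 1) := by
    intro i
    rw [← Finset.prod_filter]
    congr 1
    ext x
    simp only [Finset.mem_filter, Finset.mem_range]
    have := partOf_le_n κ (i + 1)
    omega
  simp_rw [hinner]
  apply Finset.prod_subset
  · exact Finset.range_subset_range.mpr ((conjPart_le_card κ 1).trans (card_parts_le κ))
  · intro i _ hi
    rw [Finset.mem_range, not_lt] at hi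
    apply Finset.prod_eq_one
    intro j _
    rw [partOf_eq_zero κ hi]
    simp

/-- The master transposition lemma. -/
lemma Pprod_transpose (f : ℕ → ℕ → ℝ) :
    Pprod κ f = Pprod (conj κ) (fun i j => f j i) := by
  rw [Pprod_eq_full, Pprod_eq_full, Finset.prod_comm]
  apply Finset.prod_congr rfl
  intro j _
  apply Finset.prod_congr rfl
  intro i _
  have h : (j < partOf κ (i + 1)) ↔ (i < partOf (conj κ) (j + 1)) := by
    rw [partOf_conj, galois]
  exact if_congr h rfl rfl

lemma Pprod_congr {f g : ℕ → ℕ → ℝ}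
    (h : ∀ i < conjPart κ 1, ∀ j < partOf κ (i + 1), f i j = g i j) :
    Pprod κ f = Pprod κ g := by
  unfold Pprod
  apply Finset.prod_congr rfl
  intro i hi
  apply Finset.prod_congr rfl
  intro j hj
  exact h i (Finset.mem_range.mp hi) j (Finset.mem_range.mp hj)

lemma Pprod_smul (c : ℝ) (f : ℕ → ℕ → ℝ) :
    Pprod κ (fun i j => c * f i j) = c ^ n * Pprod κ f := by
  unfold Pprod
  have h1 : ∀ i, ∏ j ∈ Finset.range (partOf κ (i + 1)), c * f i j
      = c ^ partOf κ (i + 1) * ∏ j ∈ Finset.range (partOf κ (i + 1)), f i j := by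
    intro i
    rw [Finset.prod_mul_distrib, Finset.prod_const, Finset.card_range]
  simp_rw [h1]
  rw [Finset.prod_mul_distrib, Finset.prod_pow_eq_pow_sum, sum_partOf κ]

lemma Pprod_ne_mul (c : ℝ) (f g : ℕ → ℕ → ℝ) :
    Pprod κ (fun i j => f i j * g i j) = Pprod κ f * Pprod κ g := by
  unfold Pprod
  simp_rw [Finset.prod_mul_distrib]
lemma genPoch_eq_Pprod (α : ℝ) (u : ℝ) :
    genPoch α κ u = Pprod κ (fun a b => u - (a : ℝ) / α + b) := rfl

lemma genPoch_dual {β : ℝ} (hβ : β ≠ 0) (u : ℝ) :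
    genPoch (β / 2) (conj κ) (-(2 / β) * u) = (-(2 / β)) ^ n * genPoch (2 / β) κ u := by
  rw [genPoch_eq_Pprod, genPoch_eq_Pprod, Pprod_transpose (conj κ), conj_conj]
  rw [← Pprod_smul]
  apply Pprod_congr
  intro i _ j _
  field_simp
  ring
lemma CJack_eq_Pprod (α : ℝ) (x : ℝ) :
    CJack α κ x = α ^ n * (n.factorial : ℝ) * Pprod κ (fun a b => α * b + x - a) /
      (Pprod κ (fun a b => α * ((partOf κ (a + 1) : ℝ) - b) + (conjPart κ (b + 1) : ℝ) - ((a : ℝ) + 1)) *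
       Pprod κ (fun a b => α * ((partOf κ (a + 1) : ℝ) - b - 1) + (conjPart κ (b + 1) : ℝ) - a)) := rfl

lemma CJack_dual {β : ℝ} (hβ : β ≠ 0) (x : ℝ) :
    CJack (β / 2) (conj κ) (-(β / 2) * x) = (-(β / 2)) ^ n * CJack (2 / β) κ x := by
  have hb2 : (β / 2 : ℝ) ≠ 0 := div_ne_zero hβ two_ne_zero
  have hcn : ((β / 2 : ℝ)) ^ n ≠ 0 := pow_ne_zero _ hb2
  set N := Pprod κ (fun a b => (2 / β) * b + x - a) with hNdef
  set D1 := Pprod κ (fun a b =>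
    (2 / β) * ((partOf κ (a + 1) : ℝ) - b) + (conjPart κ (b + 1) : ℝ) - ((a : ℝ) + 1)) with hD1def
  set D2 := Pprod κ (fun a b =>
    (2 / β) * ((partOf κ (a + 1) : ℝ) - b - 1) + (conjPart κ (b + 1) : ℝ) - a) with hD2def
  have hN : Pprod (conj κ) (fun a b => (β / 2) * b + (-(β / 2) * x) - a)
      = (-(β / 2)) ^ n * N := by
    rw [Pprod_transpose (conj κ), conj_conj, hNdef, ← Pprod_smul]
    apply Pprod_congr
    intro i _ j _
    field_simp
    ring
  have hD1 : Pprod (conj κ) (fun a b =>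
        (β / 2) * ((partOf (conj κ) (a + 1) : ℝ) - b) + (conjPart (conj κ) (b + 1) : ℝ)
          - ((a : ℝ) + 1))
      = (β / 2) ^ n * D2 := by
    rw [Pprod_transpose (conj κ), conj_conj, hD2def, ← Pprod_smul]
    apply Pprod_congr
    intro i _ j _
    simp only [partOf_conj, conjPart_conj]
    field_simp
    ring
  have hD2 : Pprod (conj κ) (fun a b =>
        (β / 2) * ((partOf (conj κ) (a + 1) : ℝ) - b - 1) + (conjPart (conj κ) (b + 1) : ℝ) - a)
      = (β / 2) ^ n * D1 := by
    rw [Pprod_transpose (conj κ), conj_conj, hD1def, ← Pprod_smul]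
    apply Pprod_congr
    intro i _ j _
    simp only [partOf_conj, conjPart_conj]
    field_simp
    ring
  rw [CJack_eq_Pprod, CJack_eq_Pprod, hN, hD1, hD2]
  rw [← hNdef, ← hD1def, ← hD2def]
  calc (β / 2) ^ n * (n.factorial : ℝ) * ((-(β / 2)) ^ n * N)
        / ((β / 2) ^ n * D2 * ((β / 2) ^ n * D1))
      = ((β / 2) ^ n * (β / 2) ^ n * ((-1 : ℝ) ^ n * (n.factorial : ℝ) * N))
        / ((β / 2) ^ n * (β / 2) ^ n * (D2 * D1)) := by
        congr 1
        · rw [neg_pow]; ring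
        · ring
    _ = ((-1 : ℝ) ^ n * (n.factorial : ℝ) * N) / (D2 * D1) :=
        mul_div_mul_left _ _ (mul_ne_zero hcn hcn)
    _ = (-(β / 2)) ^ n * ((2 / β) ^ n * (n.factorial : ℝ) * N / (D1 * D2)) := by
        rw [← mul_div_assoc]
        congr 1
        · have hpq : (-(β / 2) : ℝ) ^ n * (2 / β) ^ n = (-1 : ℝ) ^ n := by
            rw [← mul_pow]
            congr 1
            field_simp
          calc (-1 : ℝ) ^ n * (n.factorial : ℝ) * N
              = ((-(β / 2)) ^ n * (2 / β) ^ n) * ((n.factorial : ℝ) * N) := by rw [hpq]; ring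
            _ = (-(β / 2)) ^ n * ((2 / β) ^ n * (n.factorial : ℝ) * N) := by ring
        · ring

lemma conj_bijective {n : ℕ} : Function.Bijective (conj : Nat.Partition n → Nat.Partition n) :=
  Function.Involutive.bijective (fun κ => conj_conj κ)

theorem moment_functional_equation (k : ℕ) (n a b β : ℝ) (hβ : 0 < β)
    (hden : ∀ κ : Nat.Partition k, genPoch (2 / β) κ (β * (n - 1) + a + b + 2) ≠ 0)
    (hden' : ∀ κ : Nat.Partition k,
      genPoch (2 / (4 / β)) κ
        ((4 / β) * (-β * n / 2 - 1) + (-2 * a / β) + (-2 * b / β) + 2) ≠ 0) :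
    Mfun k n β a b = (-2 / β) ^ k * Mfun k (-β * n / 2) (4 / β) (-2 * a / β) (-2 * b / β) := by
  have hβ' : β ≠ 0 := ne_of_gt hβ
  unfold Mfun
  rw [Finset.mul_sum]
  refine Fintype.sum_bijective conj conj_bijective _ _ ?_
  intro κ
  have hα : (2 / (4 / β) : ℝ) = β / 2 := by
    field_simp
    ring
  have hU1 : (4 / β / 2) * (-β * n / 2 - 1) + (-2 * a / β) + 1
      = -(2 / β) * ((β / 2) * (n - 1) + a + 1) := by
    field_simp
    ring
  have hU2 : (4 / β) * (-β * n / 2 - 1) + (-2 * a / β) + (-2 * b / β) + 2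
      = -(2 / β) * (β * (n - 1) + a + b + 2) := by
    field_simp
    ring
  have hx : (-β * n / 2 : ℝ) = -(β / 2) * n := by ring
  rw [hα, hU1, hU2, hx, genPoch_dual κ hβ', genPoch_dual κ hβ', CJack_dual κ hβ']
  have hne : ((-(2 / β) : ℝ)) ^ k ≠ 0 :=
    pow_ne_zero _ (neg_ne_zero.mpr (div_ne_zero two_ne_zero hβ'))
  rw [mul_div_mul_left _ _ hne]
  have hone : ((-2 / β : ℝ)) ^ k * (-(β / 2)) ^ k = 1 := by
    rw [← mul_pow]
    have : (-2 / β : ℝ) * (-(β / 2)) = 1 := by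
      field_simp
    rw [this, one_pow]
  calc genPoch (2 / β) κ (β / 2 * (n - 1) + a + 1) / genPoch (2 / β) κ (β * (n - 1) + a + b + 2) *
        CJack (2 / β) κ n
      = ((-2 / β : ℝ) ^ k * (-(β / 2)) ^ k) *
        (genPoch (2 / β) κ (β / 2 * (n - 1) + a + 1) /
          genPoch (2 / β) κ (β * (n - 1) + a + b + 2) * CJack (2 / β) κ n) := by
        rw [hone, one_mul]
    _ = (-2 / β) ^ k *
        (genPoch (2 / β) κ (β / 2 * (n - 1) + a + 1) /
            genPoch (2 / β) κ (β * (n - 1) + a + b + 2) *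
          ((-(β / 2)) ^ k * CJack (2 / β) κ n)) := by ring
end

section
/- Let N ≥ 0 be an integer. Define (N+1)×(N+1) real matrices, indexed by j, k ∈ {0,…,N}: A with A_{j,j} = −(N−j), A_{j,j+1} = N−j (for j ≤ N−1), and A_{j,k} = 0 otherwise; P with P_{j,k} = binom(N−j, N−k); and the diagonal matrix Λ with Λ_{j,j} = −(N−j). Then A · P = P · Λ; that is, the columns of P are eigenvectors of A with eigenvalues −N, −(N−1), …, −1, 0. -/
lemma key_choose (m r : ℕ) :
    m * Nat.choose m r = r * Nat.choose m r + m * Nat.choose (m - 1) r := by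
  rcases m with _ | m
  · rcases r with _ | r <;> simp
  · rcases r with _ | r
    · simp
    · have h1 : Nat.choose (m + 1) (r + 1) = Nat.choose m r + Nat.choose m (r + 1) :=
        Nat.choose_succ_succ m r
      have h2 : (m + 1) * Nat.choose m r = Nat.choose (m + 1) (r + 1) * (r + 1) :=
        Nat.add_one_mul_choose_eq m r
      simp only [Nat.succ_sub_one]
      rw [h1]
      nlinarith [h2, h1]

theorem eigenvectors_of_A (N : ℕ)
    (A P Λ : Matrix (Fin (N + 1)) (Fin (N + 1)) ℝ)
    (hA : ∀ j k : Fin (N + 1),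
      A j k = if k = j then -((N : ℝ) - (j : ℕ))
        else if (k : ℕ) = (j : ℕ) + 1 then (N : ℝ) - (j : ℕ) else 0)
    (hP : ∀ j k : Fin (N + 1), P j k = ((N - (j : ℕ)).choose (N - (k : ℕ)) : ℝ))
    (hΛ : Λ = Matrix.diagonal fun j : Fin (N + 1) => -((N : ℝ) - (j : ℕ))) :
    A * P = P * Λ := by
  ext j k
  rw [hΛ, Matrix.mul_diagonal, Matrix.mul_apply, hP j k]
  have hj1 : (j : ℕ) ≤ N := Nat.lt_succ_iff.mp j.isLt
  have hk1 : (k : ℕ) ≤ N := Nat.lt_succ_iff.mp k.isLt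
  by_cases hj : (j : ℕ) = N
  · have hz : ∀ l : Fin (N + 1), A j l * P l k = 0 := by
      intro l
      rw [hA]
      split_ifs with h1 h2
      · have : (N : ℝ) - (j : ℕ) = 0 := by rw [hj]; ring
        rw [this]; ring
      · exfalso; omega
      · ring
    rw [Finset.sum_congr rfl fun l _ => hz l, Finset.sum_const_zero]
    by_cases hk : (k : ℕ) = N
    · have : (N : ℝ) - (k : ℕ) = 0 := by rw [hk]; ring
      rw [this]; ring
    · have : (N - (j : ℕ)).choose (N - (k : ℕ)) = 0 := by
        rw [hj, Nat.sub_self]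
        exact Nat.choose_eq_zero_of_lt (by omega)
      rw [this]; simp
  · have hjN : (j : ℕ) < N := lt_of_le_of_ne hj1 hj
    set j' : Fin (N + 1) := ⟨(j : ℕ) + 1, by omega⟩ with hj'
    have hne : j ≠ j' := by
      intro h
      have := congrArg Fin.val h
      simp [hj'] at this
    have hzero : ∀ l ∈ (Finset.univ : Finset (Fin (N + 1))),
        l ∉ ({j, j'} : Finset (Fin (N + 1))) → A j l * P l k = 0 := by
      intro l _ hl
      simp only [Finset.mem_insert, Finset.mem_singleton, not_or] at hl
      rw [hA]
      split_ifs with h1 h2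
      · exact absurd h1 hl.1
      · exfalso
        apply hl.2
        apply Fin.ext
        simpa [hj'] using h2
      · ring
    rw [← Finset.sum_subset (Finset.subset_univ {j, j'}) hzero,
      Finset.sum_pair hne]
    have hAjj : A j j = -((N : ℝ) - (j : ℕ)) := by rw [hA]; simp
    have hAjj' : A j j' = (N : ℝ) - (j : ℕ) := by
      rw [hA]
      rw [if_neg (Ne.symm hne), if_pos rfl]
    rw [hAjj, hAjj', hP j k, hP j' k]
    have hval : (j' : ℕ) = (j : ℕ) + 1 := rfl
    rw [hval]
    set m := N - (j : ℕ) with hm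
    set r := N - (k : ℕ) with hr
    have hsub : N - ((j : ℕ) + 1) = m - 1 := by omega
    rw [hsub]
    have hcastm : (N : ℝ) - (j : ℕ) = (m : ℝ) := by
      rw [hm]; push_cast [Nat.cast_sub hj1]; ring
    have hcastr : (N : ℝ) - (k : ℕ) = (r : ℝ) := by
      rw [hr]; push_cast [Nat.cast_sub hk1]; ring
    rw [hcastm, hcastr]
    have hkey := key_choose m r
    have : (m : ℝ) * (m.choose r : ℝ) =
        (r : ℝ) * (m.choose r : ℝ) + (m : ℝ) * ((m - 1).choose r : ℝ) := by
      exact_mod_cast congrArg (Nat.cast : ℕ → ℝ) hkey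
    linarith [this]
end

section
/- Let N ≥ 0 be an integer, let j, k ∈ {0,…,N}, and let x be a real number. Then ∑_{k'=0}^N (−1)^{k'} binom(N−j, N−k') binom(N−k', N−k) x^{k'} equals ((N−j)! / ((N−k)! (k−j)!)) · (−x)^j (1−x)^{k−j} if j ≤ k, and equals 0 if j > k. -/
theorem alternating_binomial_sum (N j k : ℕ) (hj : j ≤ N) (hk : k ≤ N) (x : ℝ) :
    ∑ k' ∈ Finset.range (N + 1),
        (-1 : ℝ) ^ k' * ((N - j).choose (N - k') : ℝ) * ((N - k').choose (N - k) : ℝ) * x ^ k' =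
      if j ≤ k then
        ((N - j).factorial : ℝ) / (((N - k).factorial : ℝ) * ((k - j).factorial : ℝ)) *
          (-x) ^ j * (1 - x) ^ (k - j)
      else 0 := by
  have hsub : Finset.Icc j k ⊆ Finset.range (N + 1) := by
    intro a ha
    simp only [Finset.mem_Icc] at ha
    simp only [Finset.mem_range]
    omega
  have hzero : ∀ k' ∈ Finset.range (N + 1), k' ∉ Finset.Icc j k →
      (-1 : ℝ) ^ k' * ((N - j).choose (N - k') : ℝ) * ((N - k').choose (N - k) : ℝ) * x ^ k' = 0 := by
    intro a hr ha
    simp only [Finset.mem_range] at hr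
    simp only [Finset.mem_Icc, not_and_or, not_le] at ha
    rcases ha with h | h
    · have : N - j < N - a := by omega
      rw [Nat.choose_eq_zero_of_lt this]
      simp
    · have : N - a < N - k := by omega
      rw [Nat.choose_eq_zero_of_lt this]
      simp
  rw [← Finset.sum_subset hsub hzero]
  by_cases hjk : j ≤ k
  · rw [if_pos hjk]
    rw [← Finset.Ico_add_one_right_eq_Icc, Finset.sum_Ico_eq_sum_range]
    have hcoef : ((N - j).factorial : ℝ) / (((N - k).factorial : ℝ) * ((k - j).factorial : ℝ))
        = ((N - j).choose (k - j) : ℝ) := by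
      rw [Nat.cast_choose ℝ (by omega : k - j ≤ N - j)]
      have : N - j - (k - j) = N - k := by omega
      rw [this, mul_comm]
    rw [hcoef]
    have hexp : (1 - x) ^ (k - j) = ∑ i ∈ Finset.range (k - j + 1),
        ((k - j).choose i : ℝ) * (-x) ^ i := by
      have := add_pow (-x) (1 : ℝ) (k - j)
      simp only [one_pow, mul_one] at this
      rw [show (1 : ℝ) - x = -x + 1 by ring, this]
      apply Finset.sum_congr rfl
      intro i _
      ring
    rw [hexp, Finset.mul_sum, show k + 1 - j = k - j + 1 from by omega]
    apply Finset.sum_congr rfl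
    intro i hi
    simp only [Finset.mem_range] at hi
    have hi' : i ≤ k - j := by omega
    have h1 : N - (j + i) = N - j - i := by omega
    have h2 : (N - j).choose (N - j - i) * (N - j - i).choose (N - k)
        = (N - j).choose (k - j) * ((k - j).choose i) := by
      rw [Nat.choose_mul (by omega : N - k ≤ N - j - i)]
      have e1 : N - j - (N - k) = k - j := by omega
      have e2 : N - j - i - (N - k) = k - j - i := by omega
      rw [e1, e2, Nat.choose_symm hi',
        show (N - j).choose (N - k) = (N - j).choose (k - j) from by
          rw [← e1]; exact (Nat.choose_symm (by omega)).symm]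
    calc (-1 : ℝ) ^ (j + i) * ((N - j).choose (N - (j + i)) : ℝ)
          * ((N - (j + i)).choose (N - k) : ℝ) * x ^ (j + i)
        = ((N - j).choose (N - j - i) * (N - j - i).choose (N - k) : ℕ)
          * ((-1 : ℝ) ^ (j + i) * x ^ (j + i)) := by
          rw [h1]; push_cast; ring
      _ = ((N - j).choose (k - j) : ℝ) * ((k - j).choose i : ℝ)
          * ((-1 : ℝ) ^ (j + i) * x ^ (j + i)) := by rw [h2]; push_cast; ring
      _ = ((N - j).choose (k - j) : ℝ) * (((k - j).choose i : ℝ) * (-x) ^ i) * (-x) ^ j := by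
          rw [pow_add, pow_add, neg_pow x j, neg_pow x i]; ring
      _ = ((N - j).choose (k - j) : ℝ) * (-x) ^ j * (((k - j).choose i : ℝ) * (-x) ^ i) := by
          ring
  · rw [if_neg hjk]
    rw [Finset.Icc_eq_empty (by omega)]
    simp
end

section
/- Let N ≥ 1 be an integer and a, b, β real. Define (N+1)×(N+1) real matrices, indexed by j, k ∈ {0,…,N}: B with B_{j,j} = B̃_j − 1, B_{j,j−1} = −D̃_j (for j ≥ 1), and B_{j,k} = 0 otherwise; P with P_{j,k} = binom(N−j, N−k); and the tridiagonal matrix X with X_{j,j−1} = u_j := −j(βN/2 + b) + (β/2)j², X_{j,j} = v_j := (a+b+1+(β/2)(2N−1))j − (β/2)(N−j)(2j+1) + (βN/2 + b)(N−2j) − 1, X_{j,j+1} = w_j := (a+b+1+(β/2)(2N−1))(j−N) + (β/2)(N−j)(N−j−1) + (βN/2 + b)(N−j), and X_{j,k} = 0 otherwise. Then B · P = P · X (equivalently, P⁻¹ B P = X). -/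
lemma scalar_key (N : ℕ) (hN : 1 ≤ N) (a b β : ℝ)
    (Bt Dt u v w : ℕ → ℝ)
    (hBt : ∀ p : ℕ, Bt p = p * (a + b + 1 + (β / 2) * (2 * (N : ℝ) - p - 1)))
    (hDt : ∀ p : ℕ, Dt p = p * ((β / 2) * ((N : ℝ) - p) + b))
    (hu : ∀ j : ℕ, u j = -(j : ℝ) * (β * N / 2 + b) + (β / 2) * (j : ℝ) ^ 2)
    (hv : ∀ j : ℕ, v j = (a + b + 1 + (β / 2) * (2 * (N : ℝ) - 1)) * j -
      (β / 2) * ((N : ℝ) - j) * (2 * (j : ℝ) + 1) + (β * N / 2 + b) * ((N : ℝ) - 2 * j) - 1)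
    (hw : ∀ j : ℕ, w j = (a + b + 1 + (β / 2) * (2 * (N : ℝ) - 1)) * ((j : ℝ) - N) +
      (β / 2) * ((N : ℝ) - j) * ((N : ℝ) - j - 1) + (β * N / 2 + b) * ((N : ℝ) - j))
    (j k : ℕ) (hj : j ≤ N) (hk : k ≤ N) :
    (Bt j - 1) * ((N - j).choose (N - k) : ℝ) - Dt j * ((N - j + 1).choose (N - k) : ℝ)
      = (if k < N then u (k + 1) * ((N - j).choose (N - k - 1) : ℝ) else 0)
        + v k * ((N - j).choose (N - k) : ℝ)
        + (if 1 ≤ k then w (k - 1) * ((N - j).choose (N - k + 1) : ℝ) else 0) := by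
  rcases Nat.lt_or_ge k N with hkN | hkN
  · rw [if_pos hkN]
    rcases le_or_gt j k with hjk | hjk
    · -- j ≤ k < N
      rcases Nat.eq_zero_or_pos k with rfl | hk1
      · -- k = 0, j = 0
        have hj0 : j = 0 := by omega
        subst hj0
        rw [if_neg (by omega)]
        simp only [Nat.sub_zero]
        have e1 : N.choose N = 1 := Nat.choose_self N
        have e2 : (N + 1).choose N = N + 1 := by
          have := Nat.choose_symm (show 1 ≤ N + 1 by omega) (n := N + 1)
          simpa [Nat.choose_one_right] using this
        have e3 : N.choose (N - 1) = N := by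
          have := Nat.choose_symm hN (n := N)
          simpa [Nat.choose_one_right] using this
        rw [e1, e2, e3, hBt, hDt, hu, hv]
        push_cast
        ring
      · -- 1 ≤ k, j ≤ k, k < N : main case
        rw [if_pos (show 1 ≤ k by omega)]
        set m := N - j with hm
        obtain ⟨s, hs⟩ : ∃ s, N - k = s + 1 := ⟨N - k - 1, by omega⟩
        have hsm : s + 1 ≤ m := by omega
        rw [hs]
        simp only [Nat.add_sub_cancel]
        have hmc : ((m : ℕ) : ℝ) = (N : ℝ) - j := by
          rw [hm]; push_cast [hj]; ring
        have hsc : ((s : ℕ) : ℝ) = (N : ℝ) - k - 1 := by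
          have : ((N - k : ℕ) : ℝ) = (N : ℝ) - k := by push_cast [hk]; ring
          rw [hs] at this; push_cast at this; linarith
        have H1 : ((m + 1).choose (s + 1) : ℝ) = m.choose s + m.choose (s + 1) := by
          rw [Nat.choose_succ_succ]; push_cast; ring
        have H2 : (m.choose (s + 1) : ℝ) * ((N : ℝ) - k) =
            (m.choose s : ℝ) * ((k : ℝ) - j + 1) := by
          have h := Nat.choose_succ_right_eq m s
          have hcast : ((m - s : ℕ) : ℝ) = (m : ℝ) - s := by
            push_cast [show s ≤ m by omega]; ring
          have := congrArg (fun t : ℕ => (t : ℝ)) h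
          push_cast at this
          rw [hcast] at this
          rw [hmc, hsc] at this
          linarith [this]
        have H3 : (m.choose (s + 1 + 1) : ℝ) * ((N : ℝ) - k + 1) =
            (m.choose (s + 1) : ℝ) * ((k : ℝ) - j) := by
          have h := Nat.choose_succ_right_eq m (s + 1)
          have hcast : ((m - (s + 1) : ℕ) : ℝ) = (m : ℝ) - s - 1 := by
            push_cast [hsm]; ring
          have := congrArg (fun t : ℕ => (t : ℝ)) h
          push_cast at this
          rw [hcast] at this
          rw [hmc, hsc] at this
          linarith [this]
        have hkm1 : ((k - 1 : ℕ) : ℝ) = (k : ℝ) - 1 := by push_cast [hk1]; ring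
        rw [hBt, hDt, hu, hv, hw, hkm1]
        push_cast
        linear_combination (-((j:ℝ) * ((β/2) * ((N:ℝ) - j) + b))) * H1
          + ((β/2) * (1 + (k:ℝ) + (j:ℝ) - (N:ℝ)) - b) * H2
          + (a + 1 - (β/2) * (1 - (k:ℝ))) * H3
    · -- j > k
      rcases Nat.eq_or_lt_of_le (Nat.succ_le_of_lt hjk) with hj1 | hj2
      · -- j = k + 1
        have e0 : N - k = (N - j) + 1 := by omega
        rw [e0]
        have z1 : ((N - j).choose (N - j + 1) : ℝ) = 0 := by
          norm_cast; exact Nat.choose_eq_zero_of_lt (by omega)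
        have z2 : ((N - j + 1).choose (N - j + 1) : ℝ) = 1 := by
          norm_cast; exact Nat.choose_self _
        have e3 : N - j + 1 - 1 = N - j := by omega
        have e4 : N - j + 1 + 1 = N - j + 2 := rfl
        have z3 : ((N - j).choose (N - j) : ℝ) = 1 := by norm_cast; exact Nat.choose_self _
        have z4 : ((N - j).choose (N - j + 2) : ℝ) = 0 := by
          norm_cast; exact Nat.choose_eq_zero_of_lt (by omega)
        rw [e3, e4, z1, z2, z3, z4]
        have hk1j : k + 1 = j := hj1
        rw [hDt, hu, ← hk1j]
        push_cast
        simp only [mul_zero, ite_self, add_zero, zero_mul, mul_one]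
        ring
      · -- j > k + 1
        have z1 : (N - j).choose (N - k) = 0 := Nat.choose_eq_zero_of_lt (by omega)
        have z2 : (N - j + 1).choose (N - k) = 0 := Nat.choose_eq_zero_of_lt (by omega)
        have z3 : (N - j).choose (N - k - 1) = 0 := Nat.choose_eq_zero_of_lt (by omega)
        have z4 : (N - j).choose (N - k + 1) = 0 := Nat.choose_eq_zero_of_lt (by omega)
        rw [z1, z2, z3, z4]
        simp
  · -- k = N
    have hkN' : k = N := by omega
    rw [hkN']
    rw [if_neg (by omega), if_pos hN]
    simp only [Nat.sub_self, Nat.choose_zero_right, Nat.zero_add, Nat.cast_one]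
    have z1 : ((N - j).choose 1 : ℝ) = (N : ℝ) - j := by
      rw [Nat.choose_one_right]; push_cast [hj]; ring
    rw [z1, hBt, hDt, hv, hw]
    have hN1 : ((N - 1 : ℕ) : ℝ) = (N : ℝ) - 1 := by push_cast [hN]; ring
    rw [hN1]
    push_cast
    ring

theorem conjugated_B_matrix (N : ℕ) (hN : 1 ≤ N) (a b β : ℝ)
    (Bt Dt u v w : ℕ → ℝ)
    (hBt : ∀ p : ℕ, Bt p = p * (a + b + 1 + (β / 2) * (2 * (N : ℝ) - p - 1)))
    (hDt : ∀ p : ℕ, Dt p = p * ((β / 2) * ((N : ℝ) - p) + b))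
    (hu : ∀ j : ℕ, u j = -(j : ℝ) * (β * N / 2 + b) + (β / 2) * (j : ℝ) ^ 2)
    (hv : ∀ j : ℕ, v j = (a + b + 1 + (β / 2) * (2 * (N : ℝ) - 1)) * j -
      (β / 2) * ((N : ℝ) - j) * (2 * (j : ℝ) + 1) + (β * N / 2 + b) * ((N : ℝ) - 2 * j) - 1)
    (hw : ∀ j : ℕ, w j = (a + b + 1 + (β / 2) * (2 * (N : ℝ) - 1)) * ((j : ℝ) - N) +
      (β / 2) * ((N : ℝ) - j) * ((N : ℝ) - j - 1) + (β * N / 2 + b) * ((N : ℝ) - j))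
    (B P X : Matrix (Fin (N + 1)) (Fin (N + 1)) ℝ)
    (hB : ∀ j k : Fin (N + 1),
      B j k = if k = j then Bt j - 1
        else if (k : ℕ) + 1 = (j : ℕ) then -Dt j else 0)
    (hP : ∀ j k : Fin (N + 1), P j k = ((N - (j : ℕ)).choose (N - (k : ℕ)) : ℝ))
    (hX : ∀ j k : Fin (N + 1),
      X j k = if (k : ℕ) + 1 = (j : ℕ) then u j
        else if k = j then v j
        else if (k : ℕ) = (j : ℕ) + 1 then w j else 0) :
    B * P = P * X := by
  ext j k
  rw [Matrix.mul_apply, Matrix.mul_apply]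
  have hone : ∀ (c : ℕ) (hc : c < N + 1) (g : Fin (N + 1) → ℝ),
      (∑ l : Fin (N + 1), if (l : ℕ) = c then g l else 0) = g ⟨c, hc⟩ := by
    intro c hc g
    rw [Finset.sum_eq_single ⟨c, hc⟩]
    · simp
    · intro l _ hl
      exact if_neg (fun h => hl (Fin.ext h))
    · intro h; exact absurd (Finset.mem_univ _) h
  have hj' : (j : ℕ) ≤ N := by omega
  have hk' : (k : ℕ) ≤ N := by omega
  -- LHS
  have hL : ∑ l, B j l * P l k
      = (Bt j - 1) * ((N - (j : ℕ)).choose (N - (k : ℕ)) : ℝ)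
        - Dt j * ((N - (j : ℕ) + 1).choose (N - (k : ℕ)) : ℝ) := by
    have hBP : ∀ l : Fin (N + 1), B j l * P l k =
        (if (l : ℕ) = (j : ℕ) then (Bt j - 1) * P l k else 0)
        + (if (l : ℕ) + 1 = (j : ℕ) then (-Dt j) * P l k else 0) := by
      intro l
      rw [hB]
      simp only [Fin.ext_iff]
      split_ifs <;> first | omega | ring
    rw [Finset.sum_congr rfl (fun l _ => hBP l), Finset.sum_add_distrib]
    have h1 : (∑ l : Fin (N + 1), if (l : ℕ) = (j : ℕ) then (Bt j - 1) * P l k else 0)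
        = (Bt j - 1) * ((N - (j : ℕ)).choose (N - (k : ℕ)) : ℝ) := by
      rw [hone (j : ℕ) j.isLt]
      rw [hP]
    rw [h1]
    rcases Nat.eq_zero_or_pos (j : ℕ) with hj0 | hj1
    · have h2 : (∑ l : Fin (N + 1), if (l : ℕ) + 1 = (j : ℕ) then (-Dt j) * P l k else 0)
          = 0 := by
        apply Finset.sum_eq_zero
        intro l _
        exact if_neg (by omega)
      rw [h2]
      have : Dt (j : ℕ) = 0 := by rw [hDt, hj0]; push_cast; ring
      rw [this]; ring
    · have h2 : (∑ l : Fin (N + 1), if (l : ℕ) + 1 = (j : ℕ) then (-Dt j) * P l k else 0)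
          = (-Dt j) * ((N - (j : ℕ) + 1).choose (N - (k : ℕ)) : ℝ) := by
        have hc : (j : ℕ) - 1 < N + 1 := by omega
        have : (∑ l : Fin (N + 1), if (l : ℕ) + 1 = (j : ℕ) then (-Dt j) * P l k else 0)
            = ∑ l : Fin (N + 1), if (l : ℕ) = (j : ℕ) - 1 then (-Dt j) * P l k else 0 :=
          Finset.sum_congr rfl (fun l _ => if_congr (by omega) rfl rfl)
        rw [this, hone ((j : ℕ) - 1) hc, hP]
        have : N - ((j : ℕ) - 1) = N - (j : ℕ) + 1 := by omega
        simp only [this]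
      rw [h2]; ring
  -- RHS
  have hR : ∑ l, P j l * X l k
      = (if (k : ℕ) < N then u ((k : ℕ) + 1) * ((N - (j : ℕ)).choose (N - (k : ℕ) - 1) : ℝ) else 0)
        + v (k : ℕ) * ((N - (j : ℕ)).choose (N - (k : ℕ)) : ℝ)
        + (if 1 ≤ (k : ℕ) then w ((k : ℕ) - 1) * ((N - (j : ℕ)).choose (N - (k : ℕ) + 1) : ℝ) else 0) := by
    have hPX : ∀ l : Fin (N + 1), P j l * X l k =
        (if (l : ℕ) = (k : ℕ) + 1 then P j l * u l else 0)
        + (if (l : ℕ) = (k : ℕ) then P j l * v l else 0)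
        + (if (l : ℕ) + 1 = (k : ℕ) then P j l * w l else 0) := by
      intro l
      rw [hX]
      simp only [Fin.ext_iff]
      split_ifs <;> first | omega | ring
    rw [Finset.sum_congr rfl (fun l _ => hPX l), Finset.sum_add_distrib,
      Finset.sum_add_distrib]
    have h2 : (∑ l : Fin (N + 1), if (l : ℕ) = (k : ℕ) then P j l * v l else 0)
        = v (k : ℕ) * ((N - (j : ℕ)).choose (N - (k : ℕ)) : ℝ) := by
      rw [hone (k : ℕ) k.isLt, hP]
      ring
    have h1 : (∑ l : Fin (N + 1), if (l : ℕ) = (k : ℕ) + 1 then P j l * u l else 0)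
        = (if (k : ℕ) < N then u ((k : ℕ) + 1) * ((N - (j : ℕ)).choose (N - (k : ℕ) - 1) : ℝ) else 0) := by
      rcases Nat.lt_or_ge (k : ℕ) N with hkN | hkN
      · rw [if_pos hkN, hone ((k : ℕ) + 1) (by omega), hP]
        have : N - ((k : ℕ) + 1) = N - (k : ℕ) - 1 := by omega
        simp only [this]
        ring
      · rw [if_neg (by omega)]
        apply Finset.sum_eq_zero
        intro l _
        exact if_neg (by omega)
    have h3 : (∑ l : Fin (N + 1), if (l : ℕ) + 1 = (k : ℕ) then P j l * w l else 0)
        = (if 1 ≤ (k : ℕ) then w ((k : ℕ) - 1) * ((N - (j : ℕ)).choose (N - (k : ℕ) + 1) : ℝ) else 0) := by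
      rcases Nat.eq_zero_or_pos (k : ℕ) with hk0 | hk1
      · rw [if_neg (by omega)]
        apply Finset.sum_eq_zero
        intro l _
        exact if_neg (by omega)
      · rw [if_pos (show 1 ≤ (k : ℕ) by omega)]
        have hc : (k : ℕ) - 1 < N + 1 := by omega
        have : (∑ l : Fin (N + 1), if (l : ℕ) + 1 = (k : ℕ) then P j l * w l else 0)
            = ∑ l : Fin (N + 1), if (l : ℕ) = (k : ℕ) - 1 then P j l * w l else 0 :=
          Finset.sum_congr rfl (fun l _ => if_congr (by omega) rfl rfl)
        rw [this, hone ((k : ℕ) - 1) hc, hP]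
        have : N - ((k : ℕ) - 1) = N - (k : ℕ) + 1 := by omega
        simp only [this]
        ring
    rw [h1, h2, h3]
  rw [hL, hR]
  exact scalar_key N hN a b β Bt Dt u v w hBt hDt hu hv hw (j : ℕ) (k : ℕ) hj' hk'
end
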